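/- arXiv:1506.05667 — 4 statements merged into one kernel-verified Lean document; each statement's English description precedes it below -/
import Mathlib

section
/- For any family 𝒢 of connected non-trivial graphs on a common vertex set V and any family ℋ of non-trivial graphs on a common vertex set V', Sd(𝒢⊙ℋ) = |V| · Sd_A(ℋ). -/
open SimpleGraph

/-- `S` is a metric generator for `G`: every pair of distinct vertices is
distinguished by some element of `S` via the shortest-path distance. -/
def IsMetricGen {V : Type*} (G : SimpleGraph V) (S : Set V) : Prop :=
  ∀ u v : V, u ≠ v → ∃ s ∈ S, G.dist s u ≠ G.dist s v

/-- `S` is an adjacency generator for `G`. -/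
def IsAdjGen {V : Type*} (G : SimpleGraph V) (S : Set V) : Prop :=
  ∀ x y : V, x ∉ S → y ∉ S → x ≠ y → ∃ s ∈ S, Xor' (G.Adj s x) (G.Adj s y)

/-- `S` is a simultaneous metric generator for the family `𝒢`. -/
def IsSimMetricGen {V : Type*} (𝒢 : Set (SimpleGraph V)) (S : Set V) : Prop :=
  ∀ G ∈ 𝒢, IsMetricGen G S

/-- `S` is a simultaneous adjacency generator for the family `ℋ`. -/
def IsSimAdjGen {V : Type*} (ℋ : Set (SimpleGraph V)) (S : Set V) : Prop :=
  ∀ H ∈ ℋ, IsAdjGen H S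

/-- The simultaneous metric dimension of a family of graphs. -/
noncomputable def Sd {V : Type*} (𝒢 : Set (SimpleGraph V)) : ℕ :=
  sInf {n | ∃ S : Set V, S.ncard = n ∧ IsSimMetricGen 𝒢 S}

/-- The simultaneous adjacency dimension of a family of graphs. -/
noncomputable def SdA {V : Type*} (ℋ : Set (SimpleGraph V)) : ℕ :=
  sInf {n | ∃ S : Set V, S.ncard = n ∧ IsSimAdjGen ℋ S}

/-- The adjacency dimension of a graph. -/
noncomputable def adjDim {V : Type*} (G : SimpleGraph V) : ℕ := SdA {G}

/-- `B` is an adjacency basis of `G`. -/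
def IsAdjBasis {V : Type*} (G : SimpleGraph V) (B : Set V) : Prop :=
  IsAdjGen G B ∧ B.ncard = adjDim G

/-- `B` is a simultaneous adjacency basis of the family `ℋ`. -/
def IsSimAdjBasis {V : Type*} (ℋ : Set (SimpleGraph V)) (B : Set V) : Prop :=
  IsSimAdjGen ℋ B ∧ B.ncard = SdA ℋ

/-- `D` is a dominating set of `G`. -/
def IsDomSet {V : Type*} (G : SimpleGraph V) (D : Set V) : Prop :=
  ∀ v ∉ D, ∃ u ∈ D, G.Adj u v

/-- `D` is a simultaneous dominating set of the family `𝒢`. -/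
def IsSimDomSet {V : Type*} (𝒢 : Set (SimpleGraph V)) (D : Set V) : Prop :=
  ∀ G ∈ 𝒢, IsDomSet G D

/-- The simultaneous domination number of a family of graphs. -/
noncomputable def Sgamma {V : Type*} (𝒢 : Set (SimpleGraph V)) : ℕ :=
  sInf {n | ∃ D : Set V, D.ncard = n ∧ IsSimDomSet 𝒢 D}

/-- The domination number of a graph. -/
noncomputable def domNum {V : Type*} (G : SimpleGraph V) : ℕ := Sgamma {G}

/-- `γ'(G) = min over vertices `v` of `γ(G - v)`. -/
noncomputable def gammaPrime {V : Type*} (G : SimpleGraph V) : ℕ :=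
  sInf {n | ∃ v : V, n = domNum (G.induce {v}ᶜ)}

/-- The corona product `G ⊙ H`: one copy of `G` together with a copy of `H`
for each vertex `i` of `G`, joining `i` to every vertex of its copy. -/
def corona {V V' : Type*} (G : SimpleGraph V) (H : SimpleGraph V') :
    SimpleGraph (V ⊕ V × V') where
  Adj x y :=
    match x, y with
    | Sum.inl i, Sum.inl j => G.Adj i j
    | Sum.inl i, Sum.inr p => i = p.1
    | Sum.inr p, Sum.inl j => p.1 = j
    | Sum.inr p, Sum.inr q => p.1 = q.1 ∧ H.Adj p.2 q.2
  symm := by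
    constructor
    rintro (i | p) (j | q) h
    · exact G.adj_symm h
    · exact h.symm
    · exact h.symm
    · exact ⟨h.1.symm, H.adj_symm h.2⟩
  loopless := by
    constructor
    rintro (i | p) h
    · exact G.irrefl h
    · exact H.irrefl h.2

/-- The family `{G ⊙ H : G ∈ 𝒢, H ∈ ℋ}` of corona products. -/
def coronaFam {V V' : Type*} (𝒢 : Set (SimpleGraph V)) (ℋ : Set (SimpleGraph V')) :
    Set (SimpleGraph (V ⊕ V × V')) :=
  {K | ∃ G ∈ 𝒢, ∃ H ∈ ℋ, K = corona G H}

/-- The join `G + H` of two (vertex-disjoint) graphs. -/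
def joinG {V₁ V₂ : Type*} (G : SimpleGraph V₁) (H : SimpleGraph V₂) :
    SimpleGraph (V₁ ⊕ V₂) where
  Adj x y :=
    match x, y with
    | Sum.inl a, Sum.inl b => G.Adj a b
    | Sum.inl _, Sum.inr _ => True
    | Sum.inr _, Sum.inl _ => True
    | Sum.inr a, Sum.inr b => H.Adj a b
  symm := by
    constructor
    rintro (a | a) (b | b) h
    · exact G.adj_symm h
    · trivial
    · trivial
    · exact H.adj_symm h
  loopless := by
    constructor
    rintro (a | a) h
    · exact G.irrefl h
    · exact H.irrefl h

/-- The family `{G + H : G ∈ 𝒢, H ∈ ℋ}` of joins. -/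
def joinFam {V₁ V₂ : Type*} (𝒢 : Set (SimpleGraph V₁)) (ℋ : Set (SimpleGraph V₂)) :
    Set (SimpleGraph (V₁ ⊕ V₂)) :=
  {K | ∃ G ∈ 𝒢, ∃ H ∈ ℋ, K = joinG G H}

/-- The family `𝒢_B(G)`: all graphs `G'` such that, for some permutation `f` of the
vertex set fixing `B` pointwise, `N_{G'}(x) = f(N_G(x))` for every `x ∈ B`. -/
def GBfam {V : Type*} (G : SimpleGraph V) (B : Set V) : Set (SimpleGraph V) :=
  {G' | ∃ f : Equiv.Perm V, (∀ x ∈ B, f x = x) ∧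
    ∀ x ∈ B, G'.neighborSet x = f '' (G.neighborSet x)}

section CoronaAux
variable {V V' : Type*} (G : SimpleGraph V) (H : SimpleGraph V')

example (i : V) (x : V') : (corona G H).Adj (Sum.inl i) (Sum.inr (i,x)) := rfl
example (i : V) (x : V') : (corona G H).Adj (Sum.inr (i,x)) (Sum.inl i) := rfl
example (i : V) (x y : V') (h : H.Adj x y) : (corona G H).Adj (Sum.inr (i,x)) (Sum.inr (i,y)) := ⟨rfl, h⟩

def inlHom : G →g corona G H where
  toFun := Sum.inl
  map_rel' := fun h => h

lemma walk_le_aux {α : Type*} {K : SimpleGraph α} (f : α → ℕ)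
    (hf : ∀ u v, K.Adj u v → f v ≤ f u + 1) :
    ∀ {u w : α} (p : K.Walk u w), f w ≤ f u + p.length := by
  intro u w p
  induction p with
  | nil => simp
  | @cons a t c h q ih =>
      have := hf a t h
      simp only [SimpleGraph.Walk.length_cons]
      omega

open scoped Classical in
/-- Candidate distance from `Sum.inr (i,b)` in the corona. -/
noncomputable def coronaF (i : V) (b : V') : V ⊕ V × V' → ℕ
  | Sum.inl k => G.dist i k + 1
  | Sum.inr p => if p.1 = i then (if p.2 = b then 0 else if H.Adj b p.2 then 1 else 2)
      else G.dist i p.1 + 2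

lemma corona_dist_inl (hG : G.Connected) (j : V) (w : V ⊕ V × V') :
    (corona G H).dist (Sum.inl j) w =
      Sum.elim (fun k => G.dist j k) (fun p => G.dist j p.1 + 1) w := by
  classical
  set f : V ⊕ V × V' → ℕ := Sum.elim (fun k => G.dist j k) (fun p => G.dist j p.1 + 1)
    with hf
  have hedge : ∀ u v, (corona G H).Adj u v → f v ≤ f u + 1 := by
    rintro (k | ⟨k, x⟩) (l | ⟨l, y⟩) h
    · have h1 : G.dist k l ≤ 1 := by
        simpa using G.dist_le (SimpleGraph.Walk.cons (show G.Adj k l from h) SimpleGraph.Walk.nil)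
      have h2 := hG.dist_triangle (u := j) (v := k) (w := l)
      simp only [hf, Sum.elim_inl]
      omega
    · have h' : k = l := h
      subst h'
      simp [hf]
    · have h' : k = l := h
      subst h'
      simp only [hf, Sum.elim_inl, Sum.elim_inr]
      omega
    · have h' : k = l := h.1
      subst h'
      simp [hf]
  have hub : ∀ w, ∃ p : (corona G H).Walk (Sum.inl j) w, p.length = f w := by
    rintro (k | ⟨k, x⟩)
    · obtain ⟨p, hp⟩ := hG.exists_walk_length_eq_dist j k
      exact ⟨p.map (inlHom G H), (SimpleGraph.Walk.length_map (f := inlHom G H) (p := p)).trans hp⟩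
    · obtain ⟨p, hp⟩ := hG.exists_walk_length_eq_dist j k
      refine ⟨(p.map (inlHom G H)).concat (rfl : k = k), ?_⟩
      simp [SimpleGraph.Walk.length_concat, hp, hf]
      exact (SimpleGraph.Walk.length_concat _ _).trans (congrArg (· + 1) ((SimpleGraph.Walk.length_map (f := inlHom G H) (p := p)).trans hp))
  obtain ⟨p, hp⟩ := hub w
  refine le_antisymm (hp ▸ SimpleGraph.dist_le p) ?_
  obtain ⟨q, hq⟩ := SimpleGraph.Reachable.exists_walk_length_eq_dist (Nonempty.intro p)
  have h3 := walk_le_aux f hedge q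
  have h4 : f (Sum.inl j) = 0 := by simp [hf]
  omega


lemma corona_dist_inr (hG : G.Connected) (i : V) (b : V') (w : V ⊕ V × V') :
    (corona G H).dist (Sum.inr (i, b)) w = coronaF G H i b w := by
  classical
  have hedge : ∀ u v, (corona G H).Adj u v → coronaF G H i b v ≤ coronaF G H i b u + 1 := by
    rintro (k | ⟨k, x⟩) (l | ⟨l, y⟩) h
    · have h1 : G.dist k l ≤ 1 := by
        simpa using G.dist_le (SimpleGraph.Walk.cons (show G.Adj k l from h) SimpleGraph.Walk.nil)
      have h2 := hG.dist_triangle (u := i) (v := k) (w := l)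
      simp only [coronaF]
      omega
    · have h' : k = l := h
      subst h'
      simp only [coronaF]
      by_cases hl : k = i
      · subst hl
        rw [if_pos rfl]
        have : G.dist k k = 0 := SimpleGraph.dist_self
        split_ifs <;> omega
      · rw [if_neg hl]
    · have h' : k = l := h
      subst h'
      simp only [coronaF]
      by_cases hl : k = i
      · subst hl
        rw [if_pos rfl]
        have : G.dist k k = 0 := SimpleGraph.dist_self
        split_ifs <;> omega
      · rw [if_neg hl]
        omega
    · obtain ⟨h1, h2⟩ := h
      have h' : k = l := h1
      subst h'
      have h2' : H.Adj x y := h2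
      simp only [coronaF]
      by_cases hl : k = i
      · subst hl
        rw [if_pos rfl, if_pos rfl]
        by_cases hx : x = b
        · subst hx
          have hby : H.Adj x y := h2'
          have hyb : ¬ (y = x) := fun he => H.irrefl (he ▸ hby)
          rw [if_pos rfl, if_neg hyb, if_pos hby]
        · rw [if_neg hx]
          split_ifs <;> omega
      · rw [if_neg hl, if_neg hl]
        omega
  have hub : ∀ w, ∃ p : (corona G H).Walk (Sum.inr (i, b)) w, p.length = coronaF G H i b w := by
    rintro (k | ⟨k, x⟩)
    · obtain ⟨p, hp⟩ := hG.exists_walk_length_eq_dist i k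
      refine ⟨SimpleGraph.Walk.cons
        (show (corona G H).Adj (Sum.inr (i, b)) (Sum.inl i) from rfl) (p.map (inlHom G H)), ?_⟩
      simp [hp, coronaF]
      exact (SimpleGraph.Walk.length_cons _ _).trans (congrArg (· + 1) ((SimpleGraph.Walk.length_map (f := inlHom G H) (p := p)).trans hp))
    · by_cases hk : k = i
      · subst hk
        by_cases hx : x = b
        · subst hx
          exact ⟨SimpleGraph.Walk.nil, by simp [coronaF]⟩
        · by_cases ha : H.Adj b x
          · refine ⟨SimpleGraph.Walk.cons
              (show (corona G H).Adj (Sum.inr (k, b)) (Sum.inr (k, x)) from ⟨rfl, ha⟩)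
              SimpleGraph.Walk.nil, ?_⟩
            simp [coronaF, hx, ha]
          · refine ⟨SimpleGraph.Walk.cons
              (show (corona G H).Adj (Sum.inr (k, b)) (Sum.inl k) from rfl)
              (SimpleGraph.Walk.cons
                (show (corona G H).Adj (Sum.inl k) (Sum.inr (k, x)) from rfl)
                SimpleGraph.Walk.nil), ?_⟩
            simp [coronaF, hx, ha]
      · obtain ⟨p, hp⟩ := hG.exists_walk_length_eq_dist i k
        refine ⟨(SimpleGraph.Walk.cons
          (show (corona G H).Adj (Sum.inr (i, b)) (Sum.inl i) from rfl)
          (p.map (inlHom G H))).concat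
          (show (corona G H).Adj (Sum.inl k) (Sum.inr (k, x)) from rfl), ?_⟩
        simp [SimpleGraph.Walk.length_concat, hp, coronaF, hk]
        exact (SimpleGraph.Walk.length_concat _ _).trans (congrArg (· + 1) ((SimpleGraph.Walk.length_cons _ _).trans (congrArg (· + 1) ((SimpleGraph.Walk.length_map (f := inlHom G H) (p := p)).trans hp))))
  obtain ⟨p, hp⟩ := hub w
  refine le_antisymm (hp ▸ SimpleGraph.dist_le p) ?_
  obtain ⟨q, hq⟩ := SimpleGraph.Reachable.exists_walk_length_eq_dist (Nonempty.intro p)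
  have h3 := walk_le_aux (coronaF G H i b) hedge q
  have h4 : coronaF G H i b (Sum.inr (i, b)) = 0 := by simp [coronaF]
  omega

open scoped Classical in
lemma coronaF_inl (i k : V) (b : V') : coronaF G H i b (Sum.inl k) = G.dist i k + 1 := rfl

open scoped Classical in
lemma coronaF_inr (i k : V) (b x : V') :
    coronaF G H i b (Sum.inr (k, x)) =
      if k = i then (if x = b then 0 else if H.Adj b x then 1 else 2)
      else G.dist i k + 2 := rfl

open scoped Classical in
lemma coronaG_inr (j k : V) (x : V') :
    Sum.elim (fun k => G.dist j k) (fun p : V × V' => G.dist j p.1 + 1) (Sum.inr (k, x)) =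
      G.dist j k + 1 := rfl


end CoronaAux

theorem statement_2 {V V' : Type*} [Fintype V] [Fintype V'] [Nontrivial V] [Nontrivial V']
    (𝒢 : Set (SimpleGraph V)) (h𝒢ne : 𝒢.Nonempty) (h𝒢 : ∀ G ∈ 𝒢, G.Connected)
    (ℋ : Set (SimpleGraph V')) (hℋne : ℋ.Nonempty) :
    Sd (coronaFam 𝒢 ℋ) = Fintype.card V * SdA ℋ := by
  classical
  -- obtain a simultaneous adjacency basis B of ℋ
  have hSdAmem : SdA ℋ ∈ {n | ∃ S : Set V', S.ncard = n ∧ IsSimAdjGen ℋ S} :=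
    Nat.sInf_mem ⟨(Set.univ : Set V').ncard, Set.univ, rfl,
      fun H _ x y hx _ _ => absurd (Set.mem_univ x) hx⟩
  obtain ⟨B, hBcard, hBgen⟩ := hSdAmem
  have hBne : B.Nonempty := by
    rcases Set.eq_empty_or_nonempty B with hB | hB
    · obtain ⟨H0, hH0⟩ := hℋne
      obtain ⟨x, y, hxy⟩ := exists_pair_ne V'
      obtain ⟨s, hs, -⟩ := hBgen H0 hH0 x y (by simp [hB]) (by simp [hB]) hxy
      exact absurd hs (by simp [hB])
    · exact hB
  obtain ⟨b0, hb0⟩ := hBne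
  set S₀ : Set (V ⊕ V × V') := Sum.inr '' (Set.univ ×ˢ B) with hS₀
  have hmem : ∀ (i : V) {b : V'}, b ∈ B → Sum.inr (i, b) ∈ S₀ :=
    fun i b hb => ⟨(i, b), ⟨Set.mem_univ i, hb⟩, rfl⟩
  have hS₀card : S₀.ncard = Fintype.card V * SdA ℋ := by
    rw [hS₀, Set.ncard_image_of_injective _ Sum.inr_injective,
      ← Nat.card_coe_set_eq, Nat.card_congr (Equiv.Set.prod _ _), Nat.card_prod,
      Nat.card_coe_set_eq, Nat.card_coe_set_eq, Set.ncard_univ,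
      Nat.card_eq_fintype_card, hBcard]
  -- S₀ is a simultaneous metric generator
  have hS₀gen : IsSimMetricGen (coronaFam 𝒢 ℋ) S₀ := by
    rintro K ⟨G, hGm, Hh, hHm, rfl⟩
    have hGc := h𝒢 G hGm
    have key : ∀ (i j : V) (y : V'),
        ∃ s ∈ S₀, (corona G Hh).dist s (Sum.inl i) ≠ (corona G Hh).dist s (Sum.inr (j, y)) := by
      intro i j y
      by_cases hij : i = j
      · subst hij
        obtain ⟨j', hj'⟩ := exists_ne i
        refine ⟨Sum.inr (j', b0), hmem j' hb0, ?_⟩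
        rw [corona_dist_inr G Hh hGc j' b0 (Sum.inl i),
          corona_dist_inr G Hh hGc j' b0 (Sum.inr (i, y)),
          coronaF_inl, coronaF_inr, if_neg (fun h => hj' h.symm)]
        omega
      · refine ⟨Sum.inr (i, b0), hmem i hb0, ?_⟩
        rw [corona_dist_inr G Hh hGc i b0 (Sum.inl i),
          corona_dist_inr G Hh hGc i b0 (Sum.inr (j, y)),
          coronaF_inl, coronaF_inr, if_neg (fun h => hij h.symm)]
        have h1 : G.dist i i = 0 := SimpleGraph.dist_self
        have h2 : G.dist i j ≠ 0 := (hGc.pos_dist_of_ne hij).ne'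
        omega
    rintro (i | ⟨i, x⟩) (j | ⟨j, y⟩) huv
    · have hij : i ≠ j := fun h => huv (by rw [h])
      refine ⟨Sum.inr (i, b0), hmem i hb0, ?_⟩
      rw [corona_dist_inr G Hh hGc i b0 (Sum.inl i),
        corona_dist_inr G Hh hGc i b0 (Sum.inl j), coronaF_inl, coronaF_inl]
      have h1 : G.dist i i = 0 := SimpleGraph.dist_self
      have h2 : G.dist i j ≠ 0 := (hGc.pos_dist_of_ne hij).ne'
      omega
    · exact key i j y
    · obtain ⟨s, hs, hd⟩ := key j i x
      exact ⟨s, hs, hd.symm⟩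
    · by_cases hij : i = j
      · subst hij
        have hxy : x ≠ y := fun h => huv (by rw [h])
        by_cases hx : x ∈ B
        · refine ⟨Sum.inr (i, x), hmem i hx, ?_⟩
          rw [corona_dist_inr G Hh hGc i x (Sum.inr (i, x)),
            corona_dist_inr G Hh hGc i x (Sum.inr (i, y)),
            coronaF_inr, coronaF_inr, if_pos rfl, if_pos rfl, if_pos rfl,
            if_neg (Ne.symm hxy)]
          split_ifs <;> omega
        · by_cases hy : y ∈ B
          · refine ⟨Sum.inr (i, y), hmem i hy, ?_⟩
            rw [corona_dist_inr G Hh hGc i y (Sum.inr (i, x)),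
              corona_dist_inr G Hh hGc i y (Sum.inr (i, y)),
              coronaF_inr, coronaF_inr, if_pos rfl, if_pos rfl, if_pos rfl,
              if_neg hxy]
            split_ifs <;> omega
          · obtain ⟨b, hbB, hxor⟩ := hBgen Hh hHm x y hx hy hxy
            have hbx : ¬ (x = b) := fun h => hx (h ▸ hbB)
            have hby : ¬ (y = b) := fun h => hy (h ▸ hbB)
            refine ⟨Sum.inr (i, b), hmem i hbB, ?_⟩
            rw [corona_dist_inr G Hh hGc i b (Sum.inr (i, x)),
              corona_dist_inr G Hh hGc i b (Sum.inr (i, y)),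
              coronaF_inr, coronaF_inr, if_pos rfl, if_pos rfl, if_neg hbx, if_neg hby]
            rcases hxor with ⟨h1, h2⟩ | ⟨h1, h2⟩
            · rw [if_pos h1, if_neg h2]; omega
            · rw [if_neg h2, if_pos h1]; omega
      · refine ⟨Sum.inr (i, b0), hmem i hb0, ?_⟩
        rw [corona_dist_inr G Hh hGc i b0 (Sum.inr (i, x)),
          corona_dist_inr G Hh hGc i b0 (Sum.inr (j, y)),
          coronaF_inr, coronaF_inr, if_pos rfl,
          if_neg (show ¬ (j = i) from fun h => hij h.symm)]
        have h2 : G.dist i j ≠ 0 := (hGc.pos_dist_of_ne hij).ne'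
        split_ifs <;> omega
  -- lower bound
  have hlower : ∀ S : Set (V ⊕ V × V'), IsSimMetricGen (coronaFam 𝒢 ℋ) S →
      Fintype.card V * SdA ℋ ≤ S.ncard := by
    intro S hSgen
    set Si : V → Set V' := fun i => {x | Sum.inr (i, x) ∈ S} with hSi
    obtain ⟨G, hGm⟩ := h𝒢ne
    have hGc := h𝒢 G hGm
    have hgen : ∀ i : V, IsSimAdjGen ℋ (Si i) := by
      intro i Hh hHm x y hx hy hxy
      have hmg := hSgen (corona G Hh) ⟨G, hGm, Hh, hHm, rfl⟩
      obtain ⟨s, hsS, hd⟩ := hmg (Sum.inr (i, x)) (Sum.inr (i, y))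
        (fun h => hxy (by simpa using h))
      rcases s with j | ⟨j, z⟩
      · exfalso
        rw [corona_dist_inl G Hh hGc j (Sum.inr (i, x)),
          corona_dist_inl G Hh hGc j (Sum.inr (i, y))] at hd
        simp at hd
      · by_cases hji : j = i
        · subst hji
          have hzS : z ∈ Si j := hsS
          have hxz : ¬ (x = z) := fun h => hx (h ▸ hzS)
          have hyz : ¬ (y = z) := fun h => hy (h ▸ hzS)
          refine ⟨z, hzS, ?_⟩
          rw [corona_dist_inr G Hh hGc j z (Sum.inr (j, x)),
            corona_dist_inr G Hh hGc j z (Sum.inr (j, y)),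
            coronaF_inr, coronaF_inr, if_pos rfl, if_pos rfl, if_neg hxz, if_neg hyz] at hd
          by_cases h1 : Hh.Adj z x <;> by_cases h2 : Hh.Adj z y
          · exact absurd (by rw [if_pos h1, if_pos h2]) hd
          · exact Or.inl ⟨h1, h2⟩
          · exact Or.inr ⟨h2, h1⟩
          · exact absurd (by rw [if_neg h1, if_neg h2]) hd
        · exfalso
          rw [corona_dist_inr G Hh hGc j z (Sum.inr (i, x)),
            corona_dist_inr G Hh hGc j z (Sum.inr (i, y)),
            coronaF_inr, coronaF_inr, if_neg (fun h => hji h.symm),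
            if_neg (fun h => hji h.symm)] at hd
          exact hd rfl
    have hSi_le : ∀ i, SdA ℋ ≤ (Si i).ncard := fun i => Nat.sInf_le ⟨Si i, rfl, hgen i⟩
    set T : Set (V × V') := Sum.inr ⁻¹' S with hT
    have h2 : (Sum.inr '' T).ncard ≤ S.ncard :=
      Set.ncard_le_ncard (Set.image_preimage_subset _ _) (Set.toFinite S)
    have h3 : T.ncard = ((Sum.inr : V × V' → V ⊕ V × V') '' T).ncard :=
      (Set.ncard_image_of_injective T (Sum.inr_injective : Function.Injective
        (Sum.inr : V × V' → V ⊕ V × V'))).symm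
    have h4 : Fintype.card V * SdA ℋ ≤ T.ncard := by
      have hTfin := Set.toFinite T
      rw [Set.ncard_eq_toFinset_card T hTfin,
        Finset.card_eq_sum_card_fiberwise (f := Prod.fst) (t := Finset.univ)
          (fun p _ => Finset.mem_univ p.1)]
      have hfib : ∀ i : V, SdA ℋ ≤ (hTfin.toFinset.filter fun p => p.1 = i).card := by
        intro i
        refine le_trans (hSi_le i) ?_
        rw [Set.ncard_eq_toFinset_card (Si i) (Set.toFinite _)]
        apply Finset.card_le_card_of_injOn (fun x => (i, x))
        · intro x hxm
          simp only [Finset.mem_coe, Set.Finite.mem_toFinset, Finset.mem_filter] at *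
          exact ⟨hxm, trivial⟩
        · intro a _ b _ h
          exact congrArg Prod.snd h
      calc Fintype.card V * SdA ℋ = ∑ _i : V, SdA ℋ := by
            rw [Finset.sum_const, Finset.card_univ, smul_eq_mul]
        _ ≤ ∑ i : V, (hTfin.toFinset.filter fun p => p.1 = i).card :=
            Finset.sum_le_sum (fun i _ => hfib i)
    omega
  have hSdmem : Sd (coronaFam 𝒢 ℋ) ∈
      {n | ∃ S : Set (V ⊕ V × V'), S.ncard = n ∧ IsSimMetricGen (coronaFam 𝒢 ℋ) S} :=
    Nat.sInf_mem ⟨S₀.ncard, S₀, rfl, hS₀gen⟩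
  obtain ⟨S, hScard, hSg⟩ := hSdmem
  refine le_antisymm (hS₀card ▸ Nat.sInf_le ⟨S₀, rfl, hS₀gen⟩) ?_
  rw [← hScard]
  exact hlower S hSg
end

section
/- For any family 𝒢 of connected non-trivial graphs on a common vertex set V and any family ℋ of non-trivial graphs on a common vertex set V', the simultaneous adjacency dimension of the corona family satisfies |V| · Sd_A(ℋ) ≤ Sd_A(𝒢⊙ℋ) ≤ |V| · Sd_A(ℋ) + |V| − 1. -/
open SimpleGraph

lemma univ_adjGen {V : Type*} (G : SimpleGraph V) : IsAdjGen G Set.univ := by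
  intro x y hx _ _
  exact absurd (Set.mem_univ x) hx

lemma sdA_mem {V : Type*} (ℋ : Set (SimpleGraph V)) :
    ∃ B : Set V, B.ncard = SdA ℋ ∧ IsSimAdjGen ℋ B := by
  have h : ({n | ∃ S : Set V, S.ncard = n ∧ IsSimAdjGen ℋ S}).Nonempty :=
    ⟨(Set.univ : Set V).ncard, Set.univ, rfl, fun H _ => univ_adjGen H⟩
  obtain ⟨S, hS1, hS2⟩ := Nat.sInf_mem h
  exact ⟨S, hS1, hS2⟩

lemma sdA_le {V : Type*} (ℋ : Set (SimpleGraph V)) (S : Set V)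
    (hS : IsSimAdjGen ℋ S) : SdA ℋ ≤ S.ncard :=
  Nat.sInf_le ⟨S, rfl, hS⟩

theorem statement_4 {V V' : Type*} [Fintype V] [Fintype V'] [Nontrivial V] [Nontrivial V']
    (𝒢 : Set (SimpleGraph V)) (h𝒢ne : 𝒢.Nonempty) (h𝒢 : ∀ G ∈ 𝒢, G.Connected)
    (ℋ : Set (SimpleGraph V')) (hℋne : ℋ.Nonempty) :
    Fintype.card V * SdA ℋ ≤ SdA (coronaFam 𝒢 ℋ) ∧
      SdA (coronaFam 𝒢 ℋ) ≤ Fintype.card V * SdA ℋ + Fintype.card V - 1 := by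
  classical
  obtain ⟨B, hBcard, hBgen⟩ := sdA_mem ℋ
  obtain ⟨H₀, hH₀⟩ := hℋne
  obtain ⟨G₀, hG₀⟩ := h𝒢ne
  obtain ⟨w₁, w₂, hw12⟩ := exists_pair_ne V'
  have hBne : B.Nonempty := by
    rcases B.eq_empty_or_nonempty with h | h
    · exfalso
      obtain ⟨s, hs, -⟩ := hBgen H₀ hH₀ w₁ w₂ (by simp [h]) (by simp [h]) hw12
      simp [h] at hs
    · exact h
  obtain ⟨b₀, hb₀⟩ := hBne
  obtain ⟨v₀⟩ : Nonempty V := inferInstance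
  constructor
  · -- lower bound
    obtain ⟨W, hWcard, hWgen⟩ := sdA_mem (coronaFam 𝒢 ℋ)
    set Bi : V → Set V' := fun i => {w | Sum.inr (i, w) ∈ W} with hBi_def
    have hBi : ∀ i, IsSimAdjGen ℋ (Bi i) := by
      intro i H hH w w' hwB hw'B hne
      have hxy : (Sum.inr (i, w) : V ⊕ V × V') ≠ Sum.inr (i, w') := by simp [hne]
      obtain ⟨s, hs, hxor⟩ := hWgen (corona G₀ H) ⟨G₀, hG₀, H, hH, rfl⟩
        (Sum.inr (i, w)) (Sum.inr (i, w')) hwB hw'B hxy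
      rcases s with j | ⟨j, b⟩
      · exfalso
        rcases hxor with ⟨h1, h2⟩ | ⟨h1, h2⟩ <;> exact h2 h1
      · rcases hxor with ⟨h1, h2⟩ | ⟨h1, h2⟩
        · obtain ⟨rfl, hadj⟩ := h1
          exact ⟨b, hs, Or.inl ⟨hadj, fun hc => h2 ⟨rfl, hc⟩⟩⟩
        · obtain ⟨rfl, hadj⟩ := h1
          exact ⟨b, hs, Or.inr ⟨hadj, fun hc => h2 ⟨rfl, hc⟩⟩⟩
    haveI : ∀ i, Fintype (Bi i) := fun i => Fintype.ofFinite _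
    have hsum : ∑ i : V, (Bi i).ncard ≤ W.ncard := by
      have key : Nat.card (Σ i : V, (Bi i)) ≤ Nat.card W := by
        apply Nat.card_le_card_of_injective
          (fun p : Σ i : V, (Bi i) => (⟨Sum.inr (p.1, p.2.1), p.2.2⟩ : W))
        rintro ⟨i, w, hw⟩ ⟨j, w', hw'⟩ h
        simp only [Subtype.mk.injEq, Sum.inr.injEq, Prod.mk.injEq] at h
        obtain ⟨rfl, h2⟩ := h
        subst h2
        rfl
      calc ∑ i : V, (Bi i).ncard = Nat.card (Σ i : V, (Bi i)) := by
            rw [Nat.card_eq_fintype_card, Fintype.card_sigma]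
            refine Finset.sum_congr rfl fun i _ => ?_
            rw [← Nat.card_coe_set_eq, Nat.card_eq_fintype_card]
        _ ≤ Nat.card W := key
        _ = W.ncard := Nat.card_coe_set_eq W
    calc Fintype.card V * SdA ℋ = ∑ _i : V, SdA ℋ := by
          rw [Finset.sum_const, Finset.card_univ, smul_eq_mul]
      _ ≤ ∑ i : V, (Bi i).ncard := Finset.sum_le_sum fun i _ => sdA_le ℋ (Bi i) (hBi i)
      _ ≤ W.ncard := hsum
      _ = SdA (coronaFam 𝒢 ℋ) := hWcard
  · -- upper bound
    set S : Set (V ⊕ V × V') :=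
      (Sum.inl '' {v₀}ᶜ) ∪ (Sum.inr '' (Set.univ ×ˢ B)) with hS_def
    have hinl : ∀ i : V, Sum.inl i ∈ S ↔ i ≠ v₀ := by intro i; simp [hS_def]
    have hinr : ∀ p : V × V', Sum.inr p ∈ S ↔ p.2 ∈ B := by
      rintro ⟨i, w⟩; simp [hS_def]
    have hgen : IsSimAdjGen (coronaFam 𝒢 ℋ) S := by
      rintro K ⟨G, hG, H, hH, rfl⟩
      obtain ⟨u, huv⟩ : ∃ u, G.Adj v₀ u := by
        obtain ⟨u, hu⟩ := exists_ne v₀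
        obtain ⟨p⟩ := ((h𝒢 G hG).preconnected v₀ u)
        cases p with
        | nil => exact absurd rfl hu
        | cons h _ => exact ⟨_, h⟩
      have hune : u ≠ v₀ := (G.ne_of_adj huv).symm
      rintro (i | ⟨i, w⟩) (j | ⟨j, w'⟩) hx hy hxy
      · exfalso
        have hi : i = v₀ := by by_contra h; exact hx ((hinl i).mpr h)
        have hj : j = v₀ := by by_contra h; exact hy ((hinl j).mpr h)
        exact hxy (by rw [hi, hj])
      · -- inl i vs inr (j, w')
        have hi : i = v₀ := by by_contra h; exact hx ((hinl i).mpr h)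
        subst i
        by_cases hj : j = v₀
        · subst j
          refine ⟨Sum.inl u, (hinl u).mpr hune, Or.inl ⟨huv.symm, ?_⟩⟩
          exact fun hc => hune hc
        · refine ⟨Sum.inr (v₀, b₀), (hinr _).mpr hb₀, Or.inl ⟨rfl, ?_⟩⟩
          exact fun hc => hj hc.1.symm
      · -- inr (i, w) vs inl j
        have hj : j = v₀ := by by_contra h; exact hy ((hinl j).mpr h)
        subst j
        by_cases hi : i = v₀
        · subst i
          refine ⟨Sum.inl u, (hinl u).mpr hune, Or.inr ⟨huv.symm, ?_⟩⟩
          exact fun hc => hune hc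
        · refine ⟨Sum.inr (v₀, b₀), (hinr _).mpr hb₀, Or.inr ⟨rfl, ?_⟩⟩
          exact fun hc => hi hc.1.symm
      · -- inr (i, w) vs inr (j, w')
        have hwB : w ∉ B := fun h => hx ((hinr _).mpr h)
        have hw'B : w' ∉ B := fun h => hy ((hinr _).mpr h)
        by_cases hij : i = j
        · subst hij
          have hne : w ≠ w' := by
            intro h; exact hxy (by rw [h])
          obtain ⟨b, hbB, hxor⟩ := hBgen H hH w w' hwB hw'B hne
          refine ⟨Sum.inr (i, b), (hinr _).mpr hbB, ?_⟩
          rcases hxor with ⟨h1, h2⟩ | ⟨h1, h2⟩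
          · exact Or.inl ⟨⟨rfl, h1⟩, fun hc => h2 hc.2⟩
          · exact Or.inr ⟨⟨rfl, h1⟩, fun hc => h2 hc.2⟩
        · by_cases hi : i = v₀
          · subst i
            have hj : j ≠ v₀ := fun h => hij h.symm
            refine ⟨Sum.inl j, (hinl j).mpr hj, Or.inr ⟨rfl, fun hc => hj hc⟩⟩
          · refine ⟨Sum.inl i, (hinl i).mpr hi, Or.inl ⟨rfl, fun hc => hij hc⟩⟩
    have hcard1 : (Sum.inl '' ({v₀}ᶜ : Set V) : Set (V ⊕ V × V')).ncard
        = Fintype.card V - 1 := by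
      rw [Set.ncard_image_of_injective _ Sum.inl_injective]
      have h1 := Set.ncard_add_ncard_compl ({v₀} : Set V)
      rw [Set.ncard_singleton, Nat.card_eq_fintype_card] at h1
      omega
    have hcard2 : (Sum.inr '' (Set.univ ×ˢ B) : Set (V ⊕ V × V')).ncard
        = Fintype.card V * SdA ℋ := by
      rw [Set.ncard_image_of_injective _ Sum.inr_injective,
        ← Nat.card_coe_set_eq, Nat.card_congr (Equiv.Set.prod _ _),
        Nat.card_prod, Nat.card_coe_set_eq, Nat.card_coe_set_eq,
        Set.ncard_univ, Nat.card_eq_fintype_card, hBcard]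
    have hle : SdA (coronaFam 𝒢 ℋ) ≤ S.ncard := sdA_le _ S hgen
    have hS_le : S.ncard ≤ (Fintype.card V - 1) + Fintype.card V * SdA ℋ := by
      calc S.ncard ≤ (Sum.inl '' ({v₀}ᶜ : Set V) : Set (V ⊕ V × V')).ncard
          + (Sum.inr '' (Set.univ ×ˢ B) : Set (V ⊕ V × V')).ncard :=
            Set.ncard_union_le _ _
        _ = (Fintype.card V - 1) + Fintype.card V * SdA ℋ := by rw [hcard1, hcard2]
    have hpos : 1 ≤ Fintype.card V := Fintype.card_pos
    omega
end

section
/- Let 𝒢 and ℋ be two families of non-trivial graphs on common vertex sets V₁ and V₂, respectively, with V₁ ∩ V₂ = ∅. Then every simultaneous adjacency basis of the family 𝒢+ℋ is a simultaneous dominating set of 𝒢+ℋ. -/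
open SimpleGraph

theorem statement_13 {V₁ V₂ : Type*} [Fintype V₁] [Fintype V₂] [Nontrivial V₁] [Nontrivial V₂]
    (𝒢 : Set (SimpleGraph V₁)) (ℋ : Set (SimpleGraph V₂))
    (B : Set (V₁ ⊕ V₂)) (hB : IsSimAdjBasis (joinFam 𝒢 ℋ) B) :
    IsSimDomSet (joinFam 𝒢 ℋ) B := by
  rintro K ⟨G, hG, H, hH, rfl⟩
  intro v hv
  by_contra hcon
  push_neg at hcon
  have hgen : IsAdjGen (joinG G H) B := hB.1 _ ⟨G, hG, H, hH, rfl⟩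
  cases v with
  | inl a =>
    have hBinl : ∀ s ∈ B, ∃ x, s = Sum.inl x := by
      intro s hs
      cases s with
      | inl x => exact ⟨x, rfl⟩
      | inr b =>
        exact absurd (show (joinG G H).Adj (Sum.inr b) (Sum.inl a) from trivial)
          (hcon _ hs)
    obtain ⟨b₁, b₂, hbne⟩ := exists_pair_ne V₂
    have h1 : Sum.inr b₁ ∉ B := fun h => by
      obtain ⟨x, hx⟩ := hBinl _ h; simp at hx
    have h2 : Sum.inr b₂ ∉ B := fun h => by
      obtain ⟨x, hx⟩ := hBinl _ h; simp at hx
    obtain ⟨s, hs, hxor⟩ := hgen _ _ h1 h2 (by simp [hbne])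
    obtain ⟨x, rfl⟩ := hBinl s hs
    have ha1 : (joinG G H).Adj (Sum.inl x) (Sum.inr b₁) := trivial
    have ha2 : (joinG G H).Adj (Sum.inl x) (Sum.inr b₂) := trivial
    rcases hxor with ⟨_, h⟩ | ⟨_, h⟩; exacts [h ha2, h ha1]
  | inr a =>
    have hBinr : ∀ s ∈ B, ∃ x, s = Sum.inr x := by
      intro s hs
      cases s with
      | inr x => exact ⟨x, rfl⟩
      | inl b =>
        exact absurd (show (joinG G H).Adj (Sum.inl b) (Sum.inr a) from trivial)
          (hcon _ hs)
    obtain ⟨b₁, b₂, hbne⟩ := exists_pair_ne V₁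
    have h1 : Sum.inl b₁ ∉ B := fun h => by
      obtain ⟨x, hx⟩ := hBinr _ h; simp at hx
    have h2 : Sum.inl b₂ ∉ B := fun h => by
      obtain ⟨x, hx⟩ := hBinr _ h; simp at hx
    obtain ⟨s, hs, hxor⟩ := hgen _ _ h1 h2 (by simp [hbne])
    obtain ⟨x, rfl⟩ := hBinr s hs
    have ha1 : (joinG G H).Adj (Sum.inr x) (Sum.inl b₁) := trivial
    have ha2 : (joinG G H).Adj (Sum.inr x) (Sum.inl b₂) := trivial
    rcases hxor with ⟨_, h⟩ | ⟨_, h⟩; exacts [h ha2, h ha1]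
end

section
/- Let 𝒢 be a family of connected non-trivial graphs on a common vertex set V, and let ℋ and ℋ' be families of non-trivial graphs on disjoint common vertex sets V'₁ and V'₂, respectively. If there exist a simultaneous adjacency basis B of ℋ satisfying B ⊄ N_H(v) for every H ∈ ℋ and every v ∈ V'₁, and a simultaneous adjacency basis B' of ℋ' satisfying B' ⊄ N_{H'}(v') for every H' ∈ ℋ' and every v' ∈ V'₂, then Sd_A(𝒢⊙(ℋ+ℋ')) = |V| · Sd_A(ℋ) + |V| · Sd_A(ℋ'). -/
open SimpleGraph

section CoronaAux

variable {V V₁ V₂ : Type*}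

@[simp] lemma corona_adj_inl_inl {G : SimpleGraph V} {H : SimpleGraph V₁} {i j : V} :
    (corona G H).Adj (Sum.inl i) (Sum.inl j) ↔ G.Adj i j := Iff.rfl

@[simp] lemma corona_adj_inl_inr {G : SimpleGraph V} {H : SimpleGraph V₁} {i : V} {p : V × V₁} :
    (corona G H).Adj (Sum.inl i) (Sum.inr p) ↔ i = p.1 := Iff.rfl

@[simp] lemma corona_adj_inr_inl {G : SimpleGraph V} {H : SimpleGraph V₁} {p : V × V₁} {j : V} :
    (corona G H).Adj (Sum.inr p) (Sum.inl j) ↔ p.1 = j := Iff.rfl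

@[simp] lemma corona_adj_inr_inr {G : SimpleGraph V} {H : SimpleGraph V₁} {p q : V × V₁} :
    (corona G H).Adj (Sum.inr p) (Sum.inr q) ↔ p.1 = q.1 ∧ H.Adj p.2 q.2 := Iff.rfl

@[simp] lemma joinG_adj_inl_inl {G : SimpleGraph V₁} {H : SimpleGraph V₂} {a b : V₁} :
    (joinG G H).Adj (Sum.inl a) (Sum.inl b) ↔ G.Adj a b := Iff.rfl

@[simp] lemma joinG_adj_inl_inr {G : SimpleGraph V₁} {H : SimpleGraph V₂} {a : V₁} {b : V₂} :
    (joinG G H).Adj (Sum.inl a) (Sum.inr b) := trivial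

@[simp] lemma joinG_adj_inr_inl {G : SimpleGraph V₁} {H : SimpleGraph V₂} {a : V₁} {b : V₂} :
    (joinG G H).Adj (Sum.inr b) (Sum.inl a) := trivial

@[simp] lemma joinG_adj_inr_inr {G : SimpleGraph V₁} {H : SimpleGraph V₂} {a b : V₂} :
    (joinG G H).Adj (Sum.inr a) (Sum.inr b) ↔ H.Adj a b := Iff.rfl

end CoronaAux

theorem statement_14 {V V₁ V₂ : Type*} [Fintype V] [Nontrivial V]
    [Fintype V₁] [Nontrivial V₁] [Fintype V₂] [Nontrivial V₂]
    (𝒢 : Set (SimpleGraph V)) (h𝒢ne : 𝒢.Nonempty) (h𝒢 : ∀ G ∈ 𝒢, G.Connected)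
    (ℋ : Set (SimpleGraph V₁)) (hℋne : ℋ.Nonempty)
    (ℋ' : Set (SimpleGraph V₂)) (hℋ'ne : ℋ'.Nonempty)
    (hB : ∃ B : Set V₁, IsSimAdjBasis ℋ B ∧ ∀ H ∈ ℋ, ∀ v : V₁, ¬ B ⊆ H.neighborSet v)
    (hB' : ∃ B' : Set V₂, IsSimAdjBasis ℋ' B' ∧ ∀ H' ∈ ℋ', ∀ v' : V₂, ¬ B' ⊆ H'.neighborSet v') :
    SdA (coronaFam 𝒢 (joinFam ℋ ℋ')) =
      Fintype.card V * SdA ℋ + Fintype.card V * SdA ℋ' := by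
    classical
  obtain ⟨B, ⟨hBgen, hBcard⟩, hBnb⟩ := hB
  obtain ⟨B', ⟨hB'gen, hB'card⟩, hB'nb⟩ := hB'
  obtain ⟨H₀, hH₀⟩ := hℋne
  obtain ⟨H₀', hH₀'⟩ := hℋ'ne
  obtain ⟨G₀, hG₀⟩ := h𝒢ne
  have hBne : B.Nonempty := by
    rcases Set.eq_empty_or_nonempty B with h | h
    · obtain ⟨x, y, hxy⟩ := exists_pair_ne V₁
      obtain ⟨s, hs, -⟩ := hBgen H₀ hH₀ x y (by simp [h]) (by simp [h]) hxy
      rw [h] at hs; exact absurd hs (Set.notMem_empty s)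
    · exact h
  have hB'ne : B'.Nonempty := by
    rcases Set.eq_empty_or_nonempty B' with h | h
    · obtain ⟨x, y, hxy⟩ := exists_pair_ne V₂
      obtain ⟨s, hs, -⟩ := hB'gen H₀' hH₀' x y (by simp [h]) (by simp [h]) hxy
      rw [h] at hs; exact absurd hs (Set.notMem_empty s)
    · exact h
  obtain ⟨b₀, hb₀⟩ := hBne
  obtain ⟨b₀', hb₀'⟩ := hB'ne
  -- the canonical simultaneous adjacency generator
  set S : Set (V ⊕ V × (V₁ ⊕ V₂)) :=
    Sum.inr '' ((Set.univ : Set V) ×ˢ (Sum.inl '' B ∪ Sum.inr '' B')) with hSdef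
  have hmemS1 : ∀ (i : V) (v : V₁), Sum.inr (i, Sum.inl v) ∈ S ↔ v ∈ B := by
    intro i v
    simp [hSdef]
  have hmemS2 : ∀ (i : V) (w : V₂), Sum.inr (i, Sum.inr w) ∈ S ↔ w ∈ B' := by
    intro i w
    simp [hSdef]
  have hmemS0 : ∀ i : V, Sum.inl i ∉ S := by
    intro i
    simp [hSdef]
  -- S is a simultaneous adjacency generator for the corona family
  have hSgen : IsSimAdjGen (coronaFam 𝒢 (joinFam ℋ ℋ')) S := by
    rintro K ⟨G, hG, J, ⟨H, hH, H', hH', rfl⟩, rfl⟩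
    have hnb1 : ∀ u : V₁, ∃ b ∈ B, ¬ H.Adj b u := by
      intro u
      obtain ⟨b, hb, hb2⟩ := Set.not_subset.mp (hBnb H hH u)
      exact ⟨b, hb, fun h => hb2 h.symm⟩
    have hnb2 : ∀ w : V₂, ∃ b ∈ B', ¬ H'.Adj b w := by
      intro w
      obtain ⟨b, hb, hb2⟩ := Set.not_subset.mp (hB'nb H' hH' w)
      exact ⟨b, hb, fun h => hb2 h.symm⟩
    intro x y hx hy hxy
    rcases x with i | ⟨i, p⟩ <;> rcases y with j | ⟨j, q⟩
    · -- both vertices of G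
      have hij : i ≠ j := fun h => hxy (by rw [h])
      exact ⟨Sum.inr (i, Sum.inl b₀), (hmemS1 i b₀).mpr hb₀, Or.inl ⟨rfl, hij⟩⟩
    · -- G vertex and copy vertex
      by_cases hij : i = j
      · subst hij
        rcases q with u | w
        · obtain ⟨b, hb, hbu⟩ := hnb1 u
          exact ⟨Sum.inr (i, Sum.inl b), (hmemS1 i b).mpr hb,
            Or.inl ⟨rfl, fun h => hbu h.2⟩⟩
        · obtain ⟨b, hb, hbw⟩ := hnb2 w
          exact ⟨Sum.inr (i, Sum.inr b), (hmemS2 i b).mpr hb,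
            Or.inl ⟨rfl, fun h => hbw h.2⟩⟩
      · rcases q with u | w
        · exact ⟨Sum.inr (j, Sum.inr b₀'), (hmemS2 j b₀').mpr hb₀',
            Or.inr ⟨⟨rfl, trivial⟩, fun h => hij h.symm⟩⟩
        · exact ⟨Sum.inr (j, Sum.inl b₀), (hmemS1 j b₀).mpr hb₀,
            Or.inr ⟨⟨rfl, trivial⟩, fun h => hij h.symm⟩⟩
    · -- copy vertex and G vertex
      by_cases hij : j = i
      · subst hij
        rcases p with u | w
        · obtain ⟨b, hb, hbu⟩ := hnb1 u
          exact ⟨Sum.inr (j, Sum.inl b), (hmemS1 j b).mpr hb,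
            Or.inr ⟨rfl, fun h => hbu h.2⟩⟩
        · obtain ⟨b, hb, hbw⟩ := hnb2 w
          exact ⟨Sum.inr (j, Sum.inr b), (hmemS2 j b).mpr hb,
            Or.inr ⟨rfl, fun h => hbw h.2⟩⟩
      · rcases p with u | w
        · exact ⟨Sum.inr (i, Sum.inr b₀'), (hmemS2 i b₀').mpr hb₀',
            Or.inl ⟨⟨rfl, trivial⟩, fun h => hij h.symm⟩⟩
        · exact ⟨Sum.inr (i, Sum.inl b₀), (hmemS1 i b₀).mpr hb₀,
            Or.inl ⟨⟨rfl, trivial⟩, fun h => hij h.symm⟩⟩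
    · -- two copy vertices
      by_cases hij : i = j
      · subst hij
        have hpq : p ≠ q := fun h => hxy (by rw [h])
        rcases p with u | w <;> rcases q with u' | w'
        · have hu : u ∉ B := fun h => hx ((hmemS1 i u).mpr h)
          have hu' : u' ∉ B := fun h => hy ((hmemS1 i u').mpr h)
          have huu' : u ≠ u' := fun h => hpq (by rw [h])
          obtain ⟨b, hb, hxor⟩ := hBgen H hH u u' hu hu' huu'
          refine ⟨Sum.inr (i, Sum.inl b), (hmemS1 i b).mpr hb, ?_⟩
          rcases hxor with ⟨h1, h2⟩ | ⟨h1, h2⟩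
          · exact Or.inl ⟨⟨rfl, h1⟩, fun h => h2 h.2⟩
          · exact Or.inr ⟨⟨rfl, h1⟩, fun h => h2 h.2⟩
        · obtain ⟨b, hb, hbw⟩ := hnb2 w'
          exact ⟨Sum.inr (i, Sum.inr b), (hmemS2 i b).mpr hb,
            Or.inl ⟨⟨rfl, trivial⟩, fun h => hbw h.2⟩⟩
        · obtain ⟨b, hb, hbw⟩ := hnb2 w
          exact ⟨Sum.inr (i, Sum.inr b), (hmemS2 i b).mpr hb,
            Or.inr ⟨⟨rfl, trivial⟩, fun h => hbw h.2⟩⟩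
        · have hw : w ∉ B' := fun h => hx ((hmemS2 i w).mpr h)
          have hw' : w' ∉ B' := fun h => hy ((hmemS2 i w').mpr h)
          have hww' : w ≠ w' := fun h => hpq (by rw [h])
          obtain ⟨b, hb, hxor⟩ := hB'gen H' hH' w w' hw hw' hww'
          refine ⟨Sum.inr (i, Sum.inr b), (hmemS2 i b).mpr hb, ?_⟩
          rcases hxor with ⟨h1, h2⟩ | ⟨h1, h2⟩
          · exact Or.inl ⟨⟨rfl, h1⟩, fun h => h2 h.2⟩
          · exact Or.inr ⟨⟨rfl, h1⟩, fun h => h2 h.2⟩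
      · rcases p with u | w
        · exact ⟨Sum.inr (i, Sum.inr b₀'), (hmemS2 i b₀').mpr hb₀',
            Or.inl ⟨⟨rfl, trivial⟩, fun h => hij h.1⟩⟩
        · exact ⟨Sum.inr (i, Sum.inl b₀), (hmemS1 i b₀).mpr hb₀,
            Or.inl ⟨⟨rfl, trivial⟩, fun h => hij h.1⟩⟩
  -- cardinality of S
  have hScard : S.ncard = Fintype.card V * SdA ℋ + Fintype.card V * SdA ℋ' := by
    have hdisj : Disjoint (Sum.inl '' B : Set (V₁ ⊕ V₂)) (Sum.inr '' B') := by
      rw [Set.disjoint_left]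
      rintro _ ⟨b, hb, rfl⟩ ⟨b', hb', h⟩
      exact Sum.inr_ne_inl h
    have hT : ((Sum.inl '' B : Set (V₁ ⊕ V₂)) ∪ Sum.inr '' B').ncard =
        SdA ℋ + SdA ℋ' := by
      rw [Set.ncard_union_eq hdisj (Set.toFinite _) (Set.toFinite _),
        Set.ncard_image_of_injective _ Sum.inl_injective,
        Set.ncard_image_of_injective _ Sum.inr_injective, hBcard, hB'card]
    rw [hSdef, Set.ncard_image_of_injective _ Sum.inr_injective,
      Set.ncard_eq_toFinset_card', Set.toFinset_prod, Finset.card_product,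
      Set.toFinset_univ, Finset.card_univ, ← Set.ncard_eq_toFinset_card', hT,
      Nat.mul_add]
  -- lower bound
  have hlow : ∀ S₀ : Set (V ⊕ V × (V₁ ⊕ V₂)),
      IsSimAdjGen (coronaFam 𝒢 (joinFam ℋ ℋ')) S₀ →
      Fintype.card V * SdA ℋ + Fintype.card V * SdA ℋ' ≤ S₀.ncard := by
    intro S₀ hgen
    set P₁ : V → Set V₁ := fun i => {v | Sum.inr (i, Sum.inl v) ∈ S₀} with hP₁
    set P₂ : V → Set V₂ := fun i => {w | Sum.inr (i, Sum.inr w) ∈ S₀} with hP₂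
    have h1 : ∀ i : V, SdA ℋ ≤ (P₁ i).ncard := by
      intro i
      refine Nat.sInf_le ⟨P₁ i, rfl, ?_⟩
      intro H hH x y hx hy hxy
      obtain ⟨s, hs, hxor⟩ := hgen (corona G₀ (joinG H H₀'))
        ⟨G₀, hG₀, _, ⟨H, hH, H₀', hH₀', rfl⟩, rfl⟩
        (Sum.inr (i, Sum.inl x)) (Sum.inr (i, Sum.inl y)) hx hy (by simp [hxy])
      rcases s with j | ⟨j, b | b⟩
      · rcases hxor with ⟨h1, h2⟩ | ⟨h1, h2⟩ <;> exact absurd h1 h2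
      · rcases hxor with ⟨⟨hji, hadj⟩, h2⟩ | ⟨⟨hji, hadj⟩, h2⟩ <;> subst hji
        · exact ⟨b, hs, Or.inl ⟨hadj, fun h => h2 ⟨rfl, h⟩⟩⟩
        · exact ⟨b, hs, Or.inr ⟨hadj, fun h => h2 ⟨rfl, h⟩⟩⟩
      · rcases hxor with ⟨h1, h2⟩ | ⟨h1, h2⟩ <;> exact absurd h1 h2
    have h2 : ∀ i : V, SdA ℋ' ≤ (P₂ i).ncard := by
      intro i
      refine Nat.sInf_le ⟨P₂ i, rfl, ?_⟩
      intro H' hH' x y hx hy hxy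
      obtain ⟨s, hs, hxor⟩ := hgen (corona G₀ (joinG H₀ H'))
        ⟨G₀, hG₀, _, ⟨H₀, hH₀, H', hH', rfl⟩, rfl⟩
        (Sum.inr (i, Sum.inr x)) (Sum.inr (i, Sum.inr y)) hx hy (by simp [hxy])
      rcases s with j | ⟨j, b | b⟩
      · rcases hxor with ⟨h1, h2⟩ | ⟨h1, h2⟩ <;> exact absurd h1 h2
      · rcases hxor with ⟨h1, h2⟩ | ⟨h1, h2⟩ <;> exact absurd h1 h2
      · rcases hxor with ⟨⟨hji, hadj⟩, h2⟩ | ⟨⟨hji, hadj⟩, h2⟩ <;> subst hji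
        · exact ⟨b, hs, Or.inl ⟨hadj, fun h => h2 ⟨rfl, h⟩⟩⟩
        · exact ⟨b, hs, Or.inr ⟨hadj, fun h => h2 ⟨rfl, h⟩⟩⟩
    set T : Set (V × (V₁ ⊕ V₂)) := {p | Sum.inr p ∈ S₀} with hT
    have hTS : Sum.inr '' T ⊆ S₀ := by
      rintro _ ⟨p, hp, rfl⟩
      exact hp
    have h3 : T.ncard ≤ S₀.ncard := by
      rw [← Set.ncard_image_of_injective T Sum.inr_injective]
      exact Set.ncard_le_ncard hTS (Set.toFinite _)
    have hfib : ∀ i : V, SdA ℋ + SdA ℋ' ≤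
        (T.toFinset.filter fun p => p.1 = i).card := by
      intro i
      set u₁ : Finset (V × (V₁ ⊕ V₂)) :=
        (P₁ i).toFinset.image fun v => (i, Sum.inl v) with hu₁
      set u₂ : Finset (V × (V₁ ⊕ V₂)) :=
        (P₂ i).toFinset.image fun w => (i, Sum.inr w) with hu₂
      have hd : Disjoint u₁ u₂ := by
        rw [Finset.disjoint_left]
        intro p hp hp'
        simp only [hu₁, hu₂, Finset.mem_image, Set.mem_toFinset] at hp hp'
        obtain ⟨v, -, rfl⟩ := hp
        obtain ⟨w, -, h⟩ := hp'
        exact Sum.inr_ne_inl (congrArg Prod.snd h)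
      have hsub : u₁ ∪ u₂ ⊆ T.toFinset.filter fun p => p.1 = i := by
        intro p hp
        rcases Finset.mem_union.mp hp with hp | hp <;>
          simp only [hu₁, hu₂, Finset.mem_image, Set.mem_toFinset] at hp <;>
          obtain ⟨v, hv, rfl⟩ := hp <;>
          simp only [Finset.mem_filter, Set.mem_toFinset] <;>
          exact ⟨hv, trivial⟩
      have hc1 : u₁.card = (P₁ i).ncard := by
        rw [hu₁, Finset.card_image_of_injective _
          (fun a b h => Sum.inl_injective (congrArg Prod.snd h)),
          Set.ncard_eq_toFinset_card']
      have hc2 : u₂.card = (P₂ i).ncard := by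
        rw [hu₂, Finset.card_image_of_injective _
          (fun a b h => Sum.inr_injective (congrArg Prod.snd h)),
          Set.ncard_eq_toFinset_card']
      calc SdA ℋ + SdA ℋ' ≤ (P₁ i).ncard + (P₂ i).ncard :=
            Nat.add_le_add (h1 i) (h2 i)
        _ = u₁.card + u₂.card := by rw [hc1, hc2]
        _ = (u₁ ∪ u₂).card := (Finset.card_union_of_disjoint hd).symm
        _ ≤ _ := Finset.card_le_card hsub
    have h4 : Fintype.card V * (SdA ℋ + SdA ℋ') ≤ T.toFinset.card := by
      rw [Finset.card_eq_sum_card_fiberwise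
        (f := Prod.fst) (t := (Finset.univ : Finset V)) (fun p _ => Finset.mem_univ _)]
      calc Fintype.card V * (SdA ℋ + SdA ℋ')
          = ∑ _i : V, (SdA ℋ + SdA ℋ') := by
            rw [Finset.sum_const, Finset.card_univ, smul_eq_mul]
        _ ≤ ∑ i : V, (T.toFinset.filter fun p => p.1 = i).card :=
            Finset.sum_le_sum fun i _ => hfib i
    rw [← Nat.mul_add]
    calc Fintype.card V * (SdA ℋ + SdA ℋ') ≤ T.toFinset.card := h4
      _ = T.ncard := (Set.ncard_eq_toFinset_card' T).symm
      _ ≤ S₀.ncard := h3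
  -- conclusion
  have hmem : Fintype.card V * SdA ℋ + Fintype.card V * SdA ℋ' ∈
      {n | ∃ S' : Set (V ⊕ V × (V₁ ⊕ V₂)), S'.ncard = n ∧
        IsSimAdjGen (coronaFam 𝒢 (joinFam ℋ ℋ')) S'} := ⟨S, hScard, hSgen⟩
  refine le_antisymm (Nat.sInf_le hmem) (le_csInf ⟨_, hmem⟩ ?_)
  rintro m ⟨S₀, rfl, hg⟩
  exact hlow S₀ hg
end
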